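/- Given a monotone Boolean CNF formula φ = (φ⁺, φ⁻) over variable set X (each clause a set of 3 variables, all positive or all negative), and assuming every satisfying assignment maps some variable to 1: for every nonempty Y ⊆ X, the assignment m_Y (mapping A to 1 iff A ∈ Y) satisfies φ if and only if the step function s^Y violates the inequality ∑_{C ∈ φ⁺} h(X | C) + ∑_{C ∈ φ⁻} I(C) ≥ h(X), where h(X|C) = h(X) - h(C) and I(C) is the three-variate mutual information over the variables of C. -/

import Mathlib

open Finset in
lemma sum_pow_real {α : Type*} [DecidableEq α] (s : Finset α) :
    (∑ T ∈ s.powerset, (-1 : ℝ) ^ T.card) = if s = ∅ then 1 else 0 := by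
  have h := Finset.sum_powerset_neg_one_pow_card (x := s)
  have : ((∑ m ∈ s.powerset, (-1 : ℤ) ^ m.card : ℤ) : ℝ)
      = ∑ T ∈ s.powerset, (-1 : ℝ) ^ T.card := by push_cast; rfl
  rw [← this, h]
  split <;> simp

open Finset in
lemma key_neg {α : Type*} [DecidableEq α] (C Y : Finset α) (hC : C.card = 3) :
    (∑ T ∈ C.powerset, (-1:ℝ) ^ (T.card + 1) * (if T ∩ Y = ∅ then (0:ℝ) else 1))
      = if C ⊆ Y then 1 else 0 := by
  have hsplit : ∀ T : Finset α,
      (-1:ℝ) ^ (T.card + 1) * (if T ∩ Y = ∅ then (0:ℝ) else 1)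
      = -((-1:ℝ) ^ T.card) + (if T ∩ Y = ∅ then (-1:ℝ)^T.card else 0) := by
    intro T
    rw [pow_succ]
    split <;> ring
  rw [Finset.sum_congr rfl fun T _ => hsplit T, Finset.sum_add_distrib,
    Finset.sum_neg_distrib, sum_pow_real]
  have hCne : C ≠ ∅ := by
    intro h; rw [h] at hC; simp at hC
  rw [if_neg hCne, neg_zero, zero_add]
  rw [← Finset.sum_filter]
  have hfilter : C.powerset.filter (fun T => T ∩ Y = ∅) = (C \ Y).powerset := by
    ext T
    simp only [Finset.mem_filter, Finset.mem_powerset, Finset.subset_sdiff,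
      ← Finset.disjoint_iff_inter_eq_empty]
  rw [hfilter, sum_pow_real]
  simp only [Finset.sdiff_eq_empty_iff_subset]

/-- for a monotone 3-CNF `φ = (pos, neg)` whose every satisfying
assignment maps some variable to 1, and any nonempty `Y`, the assignment `m_Y`
satisfies `φ` iff the step function `s^Y` violates the inequality
`∑_{C ∈ pos} h(X | C) + ∑_{C ∈ neg} I(C) ≥ h(X)`. -/
theorem monotone_sat_iff_step_violates {α : Type*} [Fintype α] [DecidableEq α]
    (pos neg : Finset (Finset α))
    (hpos : ∀ C ∈ pos, C.card = 3) (hneg : ∀ C ∈ neg, C.card = 3)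
    (hsat : ∀ m : α → Bool,
      ((∀ C ∈ pos, ∃ a ∈ C, m a = true) ∧ (∀ C ∈ neg, ∃ a ∈ C, m a = false)) →
      ∃ a, m a = true) :
    ∀ Y : Finset α, Y.Nonempty →
      (((∀ C ∈ pos, ∃ a ∈ C, a ∈ Y) ∧ (∀ C ∈ neg, ∃ a ∈ C, a ∉ Y)) ↔
        ¬ ((∑ C ∈ pos,
              ((if (Finset.univ : Finset α) ∩ Y = ∅ then (0:ℝ) else 1) -
                (if C ∩ Y = ∅ then (0:ℝ) else 1))) +
           (∑ C ∈ neg, ∑ T ∈ C.powerset,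
              (-1:ℝ) ^ (T.card + 1) * (if T ∩ Y = ∅ then (0:ℝ) else 1)) ≥
           (if (Finset.univ : Finset α) ∩ Y = ∅ then (0:ℝ) else 1))) := by
  intro Y hY
  have hYne : Y ≠ ∅ := Finset.nonempty_iff_ne_empty.mp hY
  have hu : (Finset.univ : Finset α) ∩ Y = Y := Finset.univ_inter Y
  rw [hu, if_neg hYne]
  have hposterm : ∀ C ∈ pos, ((1:ℝ) - if C ∩ Y = ∅ then (0:ℝ) else 1)
      = if C ∩ Y = ∅ then (1:ℝ) else 0 := by
    intro C _; split <;> ring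
  have hpos' : (∑ C ∈ pos, ((1:ℝ) - if C ∩ Y = ∅ then (0:ℝ) else 1))
      = ∑ C ∈ pos, (if C ∩ Y = ∅ then (1:ℝ) else 0) :=
    Finset.sum_congr rfl hposterm
  have hneg' : (∑ C ∈ neg, ∑ T ∈ C.powerset,
      (-1:ℝ) ^ (T.card + 1) * (if T ∩ Y = ∅ then (0:ℝ) else 1))
      = ∑ C ∈ neg, (if C ⊆ Y then (1:ℝ) else 0) :=
    Finset.sum_congr rfl fun C hC => key_neg C Y (hneg C hC)
  rw [hpos', hneg']
  set S : ℝ := (∑ C ∈ pos, (if C ∩ Y = ∅ then (1:ℝ) else 0))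
    + ∑ C ∈ neg, (if C ⊆ Y then (1:ℝ) else 0) with hS
  constructor
  · rintro ⟨h1, h2⟩ hge
    have hz1 : (∑ C ∈ pos, (if C ∩ Y = ∅ then (1:ℝ) else 0)) = 0 := by
      apply Finset.sum_eq_zero
      intro C hC
      obtain ⟨a, ha, haY⟩ := h1 C hC
      have : C ∩ Y ≠ ∅ := by
        apply Finset.nonempty_iff_ne_empty.mp
        exact ⟨a, Finset.mem_inter.mpr ⟨ha, haY⟩⟩
      simp [this]
    have hz2 : (∑ C ∈ neg, (if C ⊆ Y then (1:ℝ) else 0)) = 0 := by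
      apply Finset.sum_eq_zero
      intro C hC
      obtain ⟨a, ha, haY⟩ := h2 C hC
      have : ¬ C ⊆ Y := fun h => haY (h ha)
      simp [this]
    rw [hS, hz1, hz2] at hge
    norm_num at hge
  · intro hlt
    by_contra hcon
    apply hlt
    have hnn : ∀ (s : Finset (Finset α)) (p : Finset α → Prop) [DecidablePred p],
        (0:ℝ) ≤ ∑ C ∈ s, (if p C then (1:ℝ) else 0) := by
      intro s p _
      apply Finset.sum_nonneg
      intro C _
      split <;> norm_num
    rw [not_and_or] at hcon
    rcases hcon with h | h
    · push_neg at h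
      obtain ⟨C, hC, hCall⟩ := h
      have hCY : C ∩ Y = ∅ := by
        rw [Finset.eq_empty_iff_forall_notMem]
        intro a ha
        rw [Finset.mem_inter] at ha
        exact hCall a ha.1 ha.2
      have h1 : (1:ℝ) ≤ ∑ C ∈ pos, (if C ∩ Y = ∅ then (1:ℝ) else 0) := by
        have := Finset.single_le_sum (f := fun C => if C ∩ Y = ∅ then (1:ℝ) else 0)
          (fun C _ => by split <;> norm_num) hC
        simpa [hCY] using this
      have h2 := hnn neg (fun C => C ⊆ Y)
      rw [hS]; linarith
    · push_neg at h
      obtain ⟨C, hC, hCall⟩ := h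
      have hCY : C ⊆ Y := fun a ha => hCall a ha
      have h1 : (1:ℝ) ≤ ∑ C ∈ neg, (if C ⊆ Y then (1:ℝ) else 0) := by
        have := Finset.single_le_sum (f := fun C => if C ⊆ Y then (1:ℝ) else 0)
          (fun C _ => by split <;> norm_num) hC
        simpa [hCY] using this
      have h2 := hnn pos (fun C => C ∩ Y = ∅)
      rw [hS]; linarith
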